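/- Let i ∈ {1,2} and let f_i : X_i → Y_i be morphisms in an abelian monoidal category M admitting sections σ_i : Y_i → X_i with f_i ∘ σ_i = Id_{Y_i}. Then Ker(f_1 ⊗ f_2) = (Ker(f_1) ⊗ X_2) + (X_1 ⊗ Ker(f_2)) as subobjects of X_1 ⊗ X_2. -/

import Mathlib

open CategoryTheory CategoryTheory.Limits MonoidalCategory

universe v u

variable {M : Type u} [Category.{v} M] [MonoidalCategory M] [Abelian M]

/-- Let `f_i : X_i ⟶ Y_i` (`i = 1, 2`) be morphisms in an abelian monoidal
category with left exact tensor functors, admitting sections `σ_i` with `f_i ∘ σ_i = Id`.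
Then `Ker(f₁ ⊗ₘ f₂) = (Ker f₁ ⊗ X₂) + (X₁ ⊗ Ker f₂)` as subobjects of `X₁ ⊗ X₂`, where the
sum of the two subobjects is the image of the induced map from their coproduct. -/
theorem stmt7
    [∀ X : M, PreservesFiniteLimits (tensorLeft X)]
    [∀ X : M, PreservesFiniteLimits (tensorRight X)]
    {X₁ X₂ Y₁ Y₂ : M} (f₁ : X₁ ⟶ Y₁) (f₂ : X₂ ⟶ Y₂)
    (σ₁ : Y₁ ⟶ X₁) (σ₂ : Y₂ ⟶ X₂)
    (h₁ : σ₁ ≫ f₁ = 𝟙 Y₁) (h₂ : σ₂ ≫ f₂ = 𝟙 Y₂) :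
    kernelSubobject (f₁ ⊗ₘ f₂)
      = imageSubobject (biprod.desc (kernel.ι f₁ ▷ X₂) (X₁ ◁ kernel.ι f₂)) := by
  haveI : (tensorRight X₂).Additive :=
    Functor.additive_of_preserves_binary_products _
  set g : (kernel f₁ ⊗ X₂) ⊞ (X₁ ⊗ kernel f₂) ⟶ X₁ ⊗ X₂ :=
    biprod.desc (kernel.ι f₁ ▷ X₂) (X₁ ◁ kernel.ι f₂) with hg
  set k := (kernelSubobject (f₁ ⊗ₘ f₂)).arrow with hk
  have hk0 : k ≫ (f₁ ⊗ₘ f₂) = 0 := kernelSubobject_arrow_comp _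
  apply le_antisymm
  · -- kernel ≤ image
    -- q₁ : X₁ ⟶ kernel f₁ lifting 𝟙 - f₁ ≫ σ₁
    have hq : (𝟙 X₁ - f₁ ≫ σ₁) ≫ f₁ = 0 := by
      simp [Preadditive.sub_comp, Category.assoc, h₁]
    set q₁ : X₁ ⟶ kernel f₁ := kernel.lift f₁ (𝟙 X₁ - f₁ ≫ σ₁) hq with hq₁
    set t : (kernelSubobject (f₁ ⊗ₘ f₂) : M) ⟶ X₁ ⊗ X₂ := k ≫ ((f₁ ≫ σ₁) ▷ X₂) with ht
    have ht0 : t ≫ (X₁ ◁ f₂) = 0 := by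
      have : ((f₁ ≫ σ₁) ▷ X₂) ≫ (X₁ ◁ f₂) = (f₁ ⊗ₘ f₂) ≫ (σ₁ ▷ Y₂) := by
        rw [← MonoidalCategory.tensorHom_def]
        simp [MonoidalCategory.tensorHom_def, whisker_exchange]
      rw [ht, Category.assoc, this, ← Category.assoc, hk0, zero_comp]
    -- factor t through X₁ ⊗ kernel f₂ using preservation of kernels
    set g₂ : (kernelSubobject (f₁ ⊗ₘ f₂) : M) ⟶ X₁ ⊗ kernel f₂ :=
      kernel.lift (X₁ ◁ f₂) t ht0 ≫ (PreservesKernel.iso (tensorLeft X₁) f₂).inv with hg₂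
    have hg₂t : g₂ ≫ (X₁ ◁ kernel.ι f₂) = t := by
      have : (PreservesKernel.iso (tensorLeft X₁) f₂).inv ≫
          (tensorLeft X₁).map (kernel.ι f₂) = kernel.ι ((tensorLeft X₁).map f₂) := by
        rw [Iso.inv_comp_eq, PreservesKernel.iso_hom, kernelComparison_comp_ι]
      have h2 : (X₁ ◁ kernel.ι f₂) = (tensorLeft X₁).map (kernel.ι f₂) := rfl
      rw [hg₂, Category.assoc, h2, this]
      exact kernel.lift_ι _ _ _
    -- the key decomposition
    have key : (biprod.lift (k ≫ (q₁ ▷ X₂)) g₂) ≫ g = k := by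
      rw [hg, biprod.lift_desc, Category.assoc, hg₂t, ht]
      have hw : ∀ (a : X₁ ⟶ X₁), a ▷ X₂ = (tensorRight X₂).map a := fun _ => rfl
      have : (q₁ ▷ X₂) ≫ (kernel.ι f₁ ▷ X₂) = (𝟙 X₁ - f₁ ≫ σ₁) ▷ X₂ := by
        rw [← comp_whiskerRight, hq₁, kernel.lift_ι]
      rw [← Category.assoc, Category.assoc k, this]
      have hsub : (𝟙 X₁ - f₁ ≫ σ₁) ▷ X₂ = (𝟙 X₁ ▷ X₂) - ((f₁ ≫ σ₁) ▷ X₂) := by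
        rw [hw, hw, hw, Functor.map_sub]

      rw [hsub, Preadditive.comp_sub]
      simp
    exact Subobject.le_of_comm (biprod.lift (k ≫ (q₁ ▷ X₂)) g₂ ≫ factorThruImageSubobject g)
      (by rw [Category.assoc, imageSubobject_arrow_comp, key])
  · -- image ≤ kernel
    haveI : (tensorLeft X₁).Additive :=
      Functor.additive_of_preserves_binary_products _
    have w : g ≫ (f₁ ⊗ₘ f₂) = 0 := by
      apply biprod.hom_ext'
      · rw [hg, biprod.inl_desc_assoc, MonoidalCategory.tensorHom_def, ← comp_whiskerRight_assoc,
          kernel.condition]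
        have hz : (0 : kernel f₁ ⟶ Y₁) ▷ X₂ = 0 := (tensorRight X₂).map_zero _ _
        rw [hz, zero_comp, comp_zero]
      · rw [hg, biprod.inr_desc_assoc, tensorHom_def', ← MonoidalCategory.whiskerLeft_comp_assoc,
          kernel.condition]
        have hz : X₁ ◁ (0 : kernel f₂ ⟶ Y₂) = 0 := (tensorLeft X₁).map_zero _ _
        rw [hz, zero_comp, comp_zero]
    exact imageSubobject_le g (factorThruKernelSubobject _ g w) (by simp)
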